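/- For real numbers x > 0 and x₀ > 0, the lower bound ln(1+x₀) + x₀/(x₀+1) − (x₀²/(x₀+1))·(1/x) of ln(1+x) holds with equality if and only if x = x₀. -/
import Mathlib

lemma log_lower_bound_strict (x x₀ : ℝ) (hx : 0 < x) (hx₀ : 0 < x₀) (hne : x ≠ x₀) :
    Real.log (1 + x₀) + x₀ / (x₀ + 1) - (x₀ ^ 2 / (x₀ + 1)) * (1 / x) < Real.log (1 + x) := by
  have h1x : (0:ℝ) < 1 + x := by linarith
  have h1x₀ : (0:ℝ) < 1 + x₀ := by linarith
  set t : ℝ := (1 + x) / (1 + x₀) with ht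
  have htpos : 0 < t := div_pos h1x h1x₀
  have htne : t⁻¹ ≠ 1 := by
    simp only [ht]
    rw [ne_eq, inv_eq_one, div_eq_one_iff_eq (by linarith)]
    intro h; apply hne; linarith
  have key : Real.log t⁻¹ < t⁻¹ - 1 := Real.log_lt_sub_one_of_pos (by positivity) htne
  rw [Real.log_inv] at key
  have hlt : 1 - t⁻¹ < Real.log t := by linarith
  have hlogt : Real.log t = Real.log (1 + x) - Real.log (1 + x₀) :=
    Real.log_div (by linarith) (by linarith)
  have hinv : t⁻¹ = (1 + x₀) / (1 + x) := by
    rw [ht, inv_div]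
  have h2 : x₀ / (x₀ + 1) - (x₀ ^ 2 / (x₀ + 1)) * (1 / x) ≤ 1 - t⁻¹ := by
    rw [hinv, ← sub_nonneg]
    have heq : 1 - (1 + x₀) / (1 + x) - (x₀ / (x₀ + 1) - x₀ ^ 2 / (x₀ + 1) * (1 / x)) =
        (x - x₀) ^ 2 / ((1 + x) * (x₀ + 1) * x) := by
      field_simp
      ring
    rw [heq]
    positivity
  linarith [hlogt ▸ hlt]

theorem log_lower_bound_eq_iff (x x₀ : ℝ) (hx : 0 < x) (hx₀ : 0 < x₀) :
    Real.log (1 + x) =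
      Real.log (1 + x₀) + x₀ / (x₀ + 1) - (x₀ ^ 2 / (x₀ + 1)) * (1 / x) ↔ x = x₀ := by
  constructor
  · intro h
    by_contra hne
    have := log_lower_bound_strict x x₀ hx hx₀ hne
    linarith
  · rintro rfl
    have h0 : x / (x + 1) - (x ^ 2 / (x + 1)) * (1 / x) = 0 := by
      field_simp
      ring
    linarith
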